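/- arXiv:0911.4459 — 2 statements merged into one kernel-verified Lean document; each statement's English description precedes it below -/
import Mathlib

section
/- If G is a regular graph admitting an interval coloring and Δ(G) ≤ t ≤ W(G), where W(G) is the greatest number of colors in an interval coloring of G, then G has an interval t-coloring. -/
open SimpleGraph

/-- `c` is an interval `t`-coloring of `G`: edges get colors in `{1,…,t}`, every color
`1,…,t` is used, adjacent edges get distinct colors, and the set of colors of edges
incident to any vertex is an interval of integers. -/
def IsIntervalColoring {V : Type*} (G : SimpleGraph V) (t : ℕ) (c : Sym2 V → ℕ) : Prop :=
  (∀ e ∈ G.edgeSet, 1 ≤ c e ∧ c e ≤ t) ∧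
  (∀ i, 1 ≤ i → i ≤ t → ∃ e ∈ G.edgeSet, c e = i) ∧
  (∀ v w₁ w₂, G.Adj v w₁ → G.Adj v w₂ → w₁ ≠ w₂ → c s(v, w₁) ≠ c s(v, w₂)) ∧
  (∀ v i j k, (∃ w, G.Adj v w ∧ c s(v, w) = i) → (∃ w, G.Adj v w ∧ c s(v, w) = k) →
    i ≤ j → j ≤ k → ∃ w, G.Adj v w ∧ c s(v, w) = j)

/-- `G` has an interval `t`-coloring. -/
def HasIntervalColoring {V : Type*} (G : SimpleGraph V) (t : ℕ) : Prop :=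
  ∃ c : Sym2 V → ℕ, IsIntervalColoring G t c

/-- `G` is interval colorable (`G ∈ 𝔑`). -/
def IntervalColorable {V : Type*} (G : SimpleGraph V) : Prop :=
  ∃ t : ℕ, 1 ≤ t ∧ HasIntervalColoring G t

/-- `w G`: the least number of colors in an interval coloring of `G`. -/
noncomputable def wNum {V : Type*} (G : SimpleGraph V) : ℕ :=
  sInf {t | HasIntervalColoring G t}

/-- `W G`: the greatest number of colors in an interval coloring of `G`. -/
noncomputable def WNum {V : Type*} (G : SimpleGraph V) : ℕ :=
  sSup {t | HasIntervalColoring G t}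

/-- `G` is `r`-regular: every vertex has exactly `r` neighbors. -/
def IsRegularGraph {V : Type*} (G : SimpleGraph V) (r : ℕ) : Prop :=
  ∀ v : V, (G.neighborSet v).ncard = r

/-- `c` is a proper edge coloring of `G` using colors `0,…,k-1`. -/
def IsProperEdgeColoring {V : Type*} (G : SimpleGraph V) (k : ℕ) (c : Sym2 V → ℕ) : Prop :=
  (∀ e ∈ G.edgeSet, c e < k) ∧
  (∀ v w₁ w₂, G.Adj v w₁ → G.Adj v w₂ → w₁ ≠ w₂ → c s(v, w₁) ≠ c s(v, w₂))

/-- The chromatic index `χ'(G)`. -/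
noncomputable def edgeChromaticNumber {V : Type*} (G : SimpleGraph V) : ℕ :=
  sInf {k | ∃ c : Sym2 V → ℕ, IsProperEdgeColoring G k c}

/-- `G` is 1-factorable: its edge set decomposes into perfect matchings. -/
def IsOneFactorable {V : Type*} (G : SimpleGraph V) : Prop :=
  ∃ (n : ℕ) (f : Fin n → SimpleGraph.Subgraph G),
    (∀ i, (f i).IsPerfectMatching) ∧
    (∀ e ∈ G.edgeSet, ∃! i, e ∈ (f i).edgeSet)

/-- The tensor (direct) product `G × H`. -/
def tensorProd {α β : Type*} (G : SimpleGraph α) (H : SimpleGraph β) :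
    SimpleGraph (α × β) where
  Adj p q := G.Adj p.1 q.1 ∧ H.Adj p.2 q.2
  symm := ⟨fun p q ⟨h₁, h₂⟩ => ⟨h₁.symm, h₂.symm⟩⟩
  loopless := ⟨fun p h => G.loopless.irrefl p.1 h.1⟩

/-- The strong tensor (semistrong) product `G ⊗ H`. -/
def strongTensorProd {α β : Type*} (G : SimpleGraph α) (H : SimpleGraph β) :
    SimpleGraph (α × β) where
  Adj p q := (G.Adj p.1 q.1 ∧ H.Adj p.2 q.2) ∨ (p.2 = q.2 ∧ G.Adj p.1 q.1)
  symm := ⟨fun p q h => by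
    rcases h with ⟨h₁, h₂⟩ | ⟨h₁, h₂⟩
    · exact Or.inl ⟨h₁.symm, h₂.symm⟩
    · exact Or.inr ⟨h₁.symm, h₂.symm⟩⟩
  loopless := ⟨fun p h => by
    rcases h with ⟨h₁, _⟩ | ⟨_, h₁⟩ <;> exact G.loopless.irrefl p.1 h₁⟩

/-- The strong product `G ⊠ H`. -/
def strongProd {α β : Type*} (G : SimpleGraph α) (H : SimpleGraph β) :
    SimpleGraph (α × β) where
  Adj p q := (G.Adj p.1 q.1 ∧ H.Adj p.2 q.2) ∨ (p.1 = q.1 ∧ H.Adj p.2 q.2) ∨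
    (p.2 = q.2 ∧ G.Adj p.1 q.1)
  symm := ⟨fun p q h => by
    rcases h with ⟨h₁, h₂⟩ | ⟨h₁, h₂⟩ | ⟨h₁, h₂⟩
    · exact Or.inl ⟨h₁.symm, h₂.symm⟩
    · exact Or.inr (Or.inl ⟨h₁.symm, h₂.symm⟩)
    · exact Or.inr (Or.inr ⟨h₁.symm, h₂.symm⟩)⟩
  loopless := ⟨fun p h => by
    rcases h with ⟨h₁, _⟩ | ⟨_, h₂⟩ | ⟨_, h₁⟩
    · exact G.loopless.irrefl p.1 h₁
    · exact H.loopless.irrefl p.2 h₂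
    · exact G.loopless.irrefl p.1 h₁⟩

/-- The lexicographic product (composition) `G[H]`. -/
def lexProd {α β : Type*} (G : SimpleGraph α) (H : SimpleGraph β) :
    SimpleGraph (α × β) where
  Adj p q := G.Adj p.1 q.1 ∨ (p.1 = q.1 ∧ H.Adj p.2 q.2)
  symm := ⟨fun p q h => by
    rcases h with h₁ | ⟨h₁, h₂⟩
    · exact Or.inl h₁.symm
    · exact Or.inr ⟨h₁.symm, h₂.symm⟩⟩
  loopless := ⟨fun p h => by
    rcases h with h₁ | ⟨_, h₂⟩
    · exact G.loopless.irrefl p.1 h₁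
    · exact H.loopless.irrefl p.2 h₂⟩

private lemma step_lemma {V : Type*} [Fintype V] (G : SimpleGraph V) (r s : ℕ)
    (hr : IsRegularGraph G r) (hs : r + 1 ≤ s) (c : Sym2 V → ℕ)
    (hc : IsIntervalColoring G s c) : HasIntervalColoring G (s - 1) := by
  obtain ⟨hbound, hsurj, hprop, hint⟩ := hc
  -- `r ≥ 1`
  have hr1 : 1 ≤ r := by
    obtain ⟨e, he, hce⟩ := hsurj 1 le_rfl (by omega)
    induction e with
    | h a b =>
      rw [SimpleGraph.mem_edgeSet] at he
      have hb : b ∈ G.neighborSet a := he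
      have hpos : 0 < (G.neighborSet a).ncard :=
        (Set.ncard_pos (Set.toFinite _)).mpr ⟨b, hb⟩
      have := hr a
      omega
  -- palette of a vertex incident to an edge of color `s`
  have pal : ∀ v w₀, G.Adj v w₀ → c s(v, w₀) = s →
      {i | ∃ u, G.Adj v u ∧ c s(v, u) = i} = Set.Icc (s + 1 - r) s := by
    intro v w₀ hadj hcs
    set S : Set ℕ := {i | ∃ u, G.Adj v u ∧ c s(v, u) = i} with hS
    have hSimg : S = (fun u => c s(v, u)) '' (G.neighborSet v) := by
      ext i
      simp only [hS, Set.mem_setOf_eq, Set.mem_image, SimpleGraph.mem_neighborSet]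
    have hinj : Set.InjOn (fun u => c s(v, u)) (G.neighborSet v) := by
      intro a ha b hb hab
      by_contra hne
      exact hprop v a b ha hb hne hab
    have hScard : S.ncard = r := by
      rw [hSimg, Set.ncard_image_of_injOn hinj]; exact hr v
    have hsS : s ∈ S := ⟨w₀, hadj, hcs⟩
    have hmax : ∀ x ∈ S, x ≤ s := by
      rintro x ⟨u, hu, rfl⟩
      exact (hbound _ ((SimpleGraph.mem_edgeSet G).mpr hu)).2
    have hmS : sInf S ∈ S := Nat.sInf_mem ⟨s, hsS⟩
    have hsub1 : S ⊆ Set.Icc (sInf S) s := fun x hx => ⟨Nat.sInf_le hx, hmax x hx⟩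
    have hsub2 : Set.Icc (sInf S) s ⊆ S := fun x hx =>
      hint v (sInf S) x s hmS hsS hx.1 hx.2
    have hSeq : S = Set.Icc (sInf S) s := le_antisymm hsub1 hsub2
    have hIcc : (Set.Icc (sInf S) s).ncard = s + 1 - sInf S := by
      rw [← Finset.coe_Icc, Set.ncard_coe_finset, Nat.card_Icc]
    have hle : sInf S ≤ s := Nat.sInf_le hsS
    have hm : sInf S = s + 1 - r := by
      rw [hSeq, hIcc] at hScard; omega
    rw [hSeq, hm]
  refine ⟨fun e => if c e = s then s - r else c e, ?_, ?_, ?_, ?_⟩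
  · intro e he
    have hb := hbound e he
    show 1 ≤ (if c e = s then s - r else c e) ∧ (if c e = s then s - r else c e) ≤ s - 1
    by_cases h : c e = s
    · rw [if_pos h]; omega
    · rw [if_neg h]; omega
  · intro i hi1 hi2
    obtain ⟨e, he, hce⟩ := hsurj i hi1 (by omega)
    refine ⟨e, he, ?_⟩
    show (if c e = s then s - r else c e) = i
    have hne : c e ≠ s := by omega
    rw [if_neg hne]
    exact hce
  · intro v w₁ w₂ h1 h2 hne
    by_cases e1 : c s(v, w₁) = s <;> by_cases e2 : c s(v, w₂) = s
    · exact absurd (e1.trans e2.symm) (hprop v w₁ w₂ h1 h2 hne)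
    · have hmem : c s(v, w₂) ∈ Set.Icc (s + 1 - r) s := by
        rw [← pal v w₁ h1 e1]; exact ⟨w₂, h2, rfl⟩
      simp only [e1, e2, if_pos, if_neg, ite_true, ite_false]
      simp only [Set.mem_Icc] at hmem
      omega
    · have hmem : c s(v, w₁) ∈ Set.Icc (s + 1 - r) s := by
        rw [← pal v w₂ h2 e2]; exact ⟨w₁, h1, rfl⟩
      simp only [e1, e2, if_pos, if_neg, ite_true, ite_false]
      simp only [Set.mem_Icc] at hmem
      omega
    · simp only [e1, e2, ite_false]
      exact hprop v w₁ w₂ h1 h2 hne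
  · intro v i j k hi hk hij hjk
    by_cases hx : ∃ w₀, G.Adj v w₀ ∧ c s(v, w₀) = s
    · obtain ⟨w₀, hw₀, hcw₀⟩ := hx
      have hpal := pal v w₀ hw₀ hcw₀
      have hnew : ∀ x, (∃ w, G.Adj v w ∧ (if c s(v, w) = s then s - r else c s(v, w)) = x) →
          s - r ≤ x ∧ x ≤ s - 1 := by
        rintro x ⟨w, hw, hcw⟩
        have hmem : c s(v, w) ∈ Set.Icc (s + 1 - r) s := by
          rw [← hpal]; exact ⟨w, hw, rfl⟩
        simp only [Set.mem_Icc] at hmem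
        by_cases h : c s(v, w) = s
        · rw [if_pos h] at hcw; omega
        · rw [if_neg h] at hcw; omega
      have hi' := hnew i hi
      have hk' := hnew k hk
      by_cases hj : j = s - r
      · exact ⟨w₀, hw₀, by simp [hcw₀, hj]⟩
      · have hjm : j ∈ Set.Icc (s + 1 - r) s := by
          simp only [Set.mem_Icc]; omega
        rw [← hpal] at hjm
        obtain ⟨u, hu, hcu⟩ := hjm
        refine ⟨u, hu, ?_⟩
        show (if c s(v, u) = s then s - r else c s(v, u)) = j
        have hne : c s(v, u) ≠ s := by omega
        rw [if_neg hne]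
        exact hcu
    · push_neg at hx
      have heq : ∀ w, G.Adj v w → (if c s(v, w) = s then s - r else c s(v, w)) = c s(v, w) := by
        intro w hw; rw [if_neg (hx w hw)]
      obtain ⟨wi, hwi, hci⟩ := hi
      obtain ⟨wk, hwk, hck⟩ := hk
      have hci' : (if c s(v, wi) = s then s - r else c s(v, wi)) = i := hci
      have hck' : (if c s(v, wk) = s then s - r else c s(v, wk)) = k := hck
      rw [heq wi hwi] at hci'
      rw [heq wk hwk] at hck'
      obtain ⟨u, hu, hcu⟩ := hint v i j k ⟨wi, hwi, hci'⟩ ⟨wk, hwk, hck'⟩ hij hjk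
      refine ⟨u, hu, ?_⟩
      show (if c s(v, u) = s then s - r else c s(v, u)) = j
      rw [heq u hu]
      exact hcu

private lemma bdd_lemma {V : Type*} [Fintype V] (G : SimpleGraph V) :
    BddAbove {n | HasIntervalColoring G n} := by
  classical
  refine ⟨Fintype.card (Sym2 V) + 1, fun n hn => ?_⟩
  obtain ⟨c, hbound, hsurj, -, -⟩ := hn
  by_contra hcon
  push_neg at hcon
  set f : ℕ → Option (Sym2 V) := fun i =>
    if h : ∃ e ∈ G.edgeSet, c e = i then some h.choose else none with hf
  have hcard : (Finset.Icc 1 n).card ≤ Fintype.card (Option (Sym2 V)) := by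
    apply Finset.card_le_card_of_injOn f (fun a _ => Finset.mem_univ _)
    intro a ha b hb hab
    simp only [Finset.coe_Icc, Set.mem_Icc] at ha hb
    have hea : ∃ e ∈ G.edgeSet, c e = a := hsurj a ha.1 ha.2
    have heb : ∃ e ∈ G.edgeSet, c e = b := hsurj b hb.1 hb.2
    simp only [hf, dif_pos hea, dif_pos heb, Option.some.injEq] at hab
    have h1 := hea.choose_spec.2
    have h2 := heb.choose_spec.2
    rw [← h1, ← h2, hab]
  rw [Nat.card_Icc, Fintype.card_option] at hcard
  omega

/-- If `G` is `r`-regular and interval colorable, then for every `t` with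
`Δ(G) = r ≤ t ≤ W(G)`, `G` has an interval `t`-coloring. -/
theorem regular_interval_spectrum {V : Type*} [Fintype V]
    (G : SimpleGraph V) (r : ℕ) (hr : IsRegularGraph G r)
    (hG : IntervalColorable G) (t : ℕ) (h₁ : r ≤ t) (h₂ : t ≤ WNum G) :
    HasIntervalColoring G t := by
  obtain ⟨t₀, _, hc₀⟩ := hG
  have hne : {n | HasIntervalColoring G n}.Nonempty := ⟨t₀, hc₀⟩
  have hW : HasIntervalColoring G (WNum G) := Nat.sSup_mem hne (bdd_lemma G)
  have key : ∀ k, HasIntervalColoring G (t + k) → HasIntervalColoring G t := by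
    intro k
    induction k with
    | zero => simpa using id
    | succ n ih =>
      intro h
      obtain ⟨c, hc⟩ := h
      have := step_lemma G r (t + n + 1) hr (by omega) c hc
      have heq : t + n + 1 - 1 = t + n := by omega
      rw [heq] at this
      exact ih this
  have hWt : t + (WNum G - t) = WNum G := by omega
  exact key (WNum G - t) (by rw [hWt]; exact hW)
end

section
/- If graphs G and H both admit interval colorings, then their Cartesian product G □ H admits an interval coloring; moreover w(G □ H) ≤ w(G) + w(H) and W(G □ H) ≥ W(G) + W(H). -/
open SimpleGraph

open SimpleGraph

/-- The set of colors incident to a vertex. -/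
def vset {V : Type*} (G : SimpleGraph V) (c : Sym2 V → ℕ) (v : V) : Set ℕ :=
  {i | ∃ w, G.Adj v w ∧ c s(v, w) = i}

open Classical in
/-- The combined coloring of the box product. -/
noncomputable def boxColor {α β : Type*} (G : SimpleGraph α) (H : SimpleGraph β)
    (cG : Sym2 α → ℕ) (cH : Sym2 β → ℕ) : Sym2 (α × β) → ℕ :=
  Sym2.lift ⟨fun p q =>
    if p.2 = q.2 then cG s(p.1, q.1) + (sInf (vset H cH p.2) - 1)
    else if p.1 = q.1 then cH s(p.2, q.2) + sSup (vset G cG p.1) else 0, by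
    intro p q
    dsimp only
    by_cases h2 : p.2 = q.2
    · rw [if_pos h2, if_pos h2.symm, Sym2.eq_swap, h2]
    · have h2' : ¬q.2 = p.2 := fun h => h2 h.symm
      rw [if_neg h2, if_neg h2']
      by_cases h1 : p.1 = q.1
      · rw [if_pos h1, if_pos h1.symm, Sym2.eq_swap, h1]
      · have h1' : ¬q.1 = p.1 := fun h => h1 h.symm
        rw [if_neg h1, if_neg h1']⟩

lemma boxColor_horiz {α β : Type*} (G : SimpleGraph α) (H : SimpleGraph β)
    (cG : Sym2 α → ℕ) (cH : Sym2 β → ℕ) {p q : α × β} (h : p.2 = q.2) :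
    boxColor G H cG cH s(p, q) = cG s(p.1, q.1) + (sInf (vset H cH p.2) - 1) := by
  simp [boxColor, h]

lemma boxColor_vert {α β : Type*} (G : SimpleGraph α) (H : SimpleGraph β)
    (cG : Sym2 α → ℕ) (cH : Sym2 β → ℕ) {p q : α × β} (h2 : p.2 ≠ q.2) (h1 : p.1 = q.1) :
    boxColor G H cG cH s(p, q) = cH s(p.2, q.2) + sSup (vset G cG p.1) := by
  simp [boxColor, h2, h1]

lemma boxColor_horiz' {α β : Type*} (G : SimpleGraph α) (H : SimpleGraph β)
    (cG : Sym2 α → ℕ) (cH : Sym2 β → ℕ) (p : α × β) (u' : α) :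
    boxColor G H cG cH s(p, (u', p.2)) = cG s(p.1, u') + (sInf (vset H cH p.2) - 1) := by
  simp [boxColor]

lemma boxColor_vert' {α β : Type*} (G : SimpleGraph α) (H : SimpleGraph β)
    (cG : Sym2 α → ℕ) (cH : Sym2 β → ℕ) (p : α × β) (v' : β) (h : p.2 ≠ v') :
    boxColor G H cG cH s(p, (p.1, v')) = cH s(p.2, v') + sSup (vset G cG p.1) := by
  simp [boxColor, h]

lemma combine {α β : Type*} (G : SimpleGraph α) (H : SimpleGraph β) {t s : ℕ}
    (ht : 1 ≤ t) (hs : 1 ≤ s)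
    (hGc : HasIntervalColoring G t) (hHc : HasIntervalColoring H s) :
    HasIntervalColoring (G □ H) (t + s) := by
  classical
  obtain ⟨cG, hGr, hGs, hGp, hGi⟩ := hGc
  obtain ⟨cH, hHr, hHs, hHp, hHi⟩ := hHc
  -- basic facts
  have hSGle : ∀ u, ∀ i ∈ vset G cG u, 1 ≤ i ∧ i ≤ t := by
    rintro u i ⟨w, hw, rfl⟩
    exact hGr _ (G.mem_edgeSet.mpr hw)
  have hSHle : ∀ v, ∀ i ∈ vset H cH v, 1 ≤ i ∧ i ≤ s := by
    rintro v i ⟨w, hw, rfl⟩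
    exact hHr _ (H.mem_edgeSet.mpr hw)
  have hSGbdd : ∀ u, BddAbove (vset G cG u) := fun u => ⟨t, fun i hi => (hSGle u i hi).2⟩
  have hSupG_le : ∀ u, sSup (vset G cG u) ≤ t := by
    intro u
    by_cases h : (vset G cG u).Nonempty
    · exact (hSGle u _ (Nat.sSup_mem h (hSGbdd u))).2
    · rw [Set.not_nonempty_iff_eq_empty.mp h]
      simp
  have hInfH_le : ∀ v, sInf (vset H cH v) ≤ s := by
    intro v
    by_cases h : (vset H cH v).Nonempty
    · exact (hSHle v _ (Nat.sInf_mem h)).2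
    · rw [Set.not_nonempty_iff_eq_empty.mp h]
      simp
  have hInfH_ge : ∀ v, (vset H cH v).Nonempty → 1 ≤ sInf (vset H cH v) :=
    fun v h => (hSHle v _ (Nat.sInf_mem h)).1
  refine ⟨boxColor G H cG cH, ?_, ?_, ?_, ?_⟩
  · -- range
    intro e he
    induction e using Sym2.ind with
    | _ p q =>
      rcases SimpleGraph.boxProd_adj.mp ((G □ H).mem_edgeSet.mp he) with
        ⟨hadj, heq⟩ | ⟨hadj, heq⟩
      · rw [boxColor_horiz G H cG cH heq]
        have h1 := hGr _ (G.mem_edgeSet.mpr hadj)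
        have h2 := hInfH_le p.2
        omega
      · rw [boxColor_vert G H cG cH hadj.ne heq]
        have h1 := hHr _ (H.mem_edgeSet.mpr hadj)
        have h2 := hSupG_le p.1
        omega
  · -- surjectivity
    intro i h1 hi
    by_cases hit : i ≤ t
    · obtain ⟨e, he, hce⟩ := hGs i h1 hit
      induction e using Sym2.ind with
      | _ u u' =>
        have hadj : G.Adj u u' := G.mem_edgeSet.mp he
        obtain ⟨e', he', hce'⟩ := hHs 1 le_rfl hs
        induction e' using Sym2.ind with
        | _ v v' =>
          have hadjH : H.Adj v v' := H.mem_edgeSet.mp he'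
          have h1mem : (1 : ℕ) ∈ vset H cH v := ⟨v', hadjH, hce'⟩
          have hinf1 : sInf (vset H cH v) = 1 :=
            le_antisymm (Nat.sInf_le h1mem) (hInfH_ge v ⟨1, h1mem⟩)
          refine ⟨s((u, v), (u', (u, v).2)), ?_, ?_⟩
          · exact (G □ H).mem_edgeSet.mpr (SimpleGraph.boxProd_adj.mpr (Or.inl ⟨hadj, rfl⟩))
          · rw [boxColor_horiz' G H cG cH (u, v) u']
            dsimp only
            rw [hinf1]
            omega
    · obtain ⟨e', he', hce'⟩ := hHs (i - t) (by omega) (by omega)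
      induction e' using Sym2.ind with
      | _ v v' =>
        have hadjH : H.Adj v v' := H.mem_edgeSet.mp he'
        obtain ⟨e, he, hce⟩ := hGs t ht le_rfl
        induction e using Sym2.ind with
        | _ u u' =>
          have hadj : G.Adj u u' := G.mem_edgeSet.mp he
          have htmem : t ∈ vset G cG u := ⟨u', hadj, hce⟩
          have hsup : sSup (vset G cG u) = t :=
            le_antisymm (hSupG_le u) (le_csSup (hSGbdd u) htmem)
          refine ⟨s((u, v), ((u, v).1, v')), ?_, ?_⟩
          · exact (G □ H).mem_edgeSet.mpr (SimpleGraph.boxProd_adj.mpr (Or.inr ⟨hadjH, rfl⟩))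
          · rw [boxColor_vert' G H cG cH (u, v) v' hadjH.ne]
            dsimp only
            rw [hsup]
            omega
  · -- proper
    intro p q₁ q₂ h1 h2 hne
    rcases SimpleGraph.boxProd_adj.mp h1 with ⟨ha1, he1⟩ | ⟨ha1, he1⟩ <;>
      rcases SimpleGraph.boxProd_adj.mp h2 with ⟨ha2, he2⟩ | ⟨ha2, he2⟩
    · rw [boxColor_horiz G H cG cH he1, boxColor_horiz G H cG cH he2]
      have hq : q₁.1 ≠ q₂.1 := by
        intro h
        exact hne (Prod.ext h (he1.symm.trans he2))
      have := hGp p.1 q₁.1 q₂.1 ha1 ha2 hq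
      omega
    · rw [boxColor_horiz G H cG cH he1, boxColor_vert G H cG cH ha2.ne he2]
      have ha : cG s(p.1, q₁.1) ≤ sSup (vset G cG p.1) :=
        le_csSup (hSGbdd p.1) ⟨q₁.1, ha1, rfl⟩
      have hm : sInf (vset H cH p.2) ≤ cH s(p.2, q₂.2) := Nat.sInf_le ⟨q₂.2, ha2, rfl⟩
      have hm1 : 1 ≤ sInf (vset H cH p.2) := hInfH_ge p.2 ⟨_, ⟨q₂.2, ha2, rfl⟩⟩
      omega
    · rw [boxColor_vert G H cG cH ha1.ne he1, boxColor_horiz G H cG cH he2]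
      have ha : cG s(p.1, q₂.1) ≤ sSup (vset G cG p.1) :=
        le_csSup (hSGbdd p.1) ⟨q₂.1, ha2, rfl⟩
      have hm : sInf (vset H cH p.2) ≤ cH s(p.2, q₁.2) := Nat.sInf_le ⟨q₁.2, ha1, rfl⟩
      have hm1 : 1 ≤ sInf (vset H cH p.2) := hInfH_ge p.2 ⟨_, ⟨q₁.2, ha1, rfl⟩⟩
      omega
    · rw [boxColor_vert G H cG cH ha1.ne he1, boxColor_vert G H cG cH ha2.ne he2]
      have hq : q₁.2 ≠ q₂.2 := by
        intro h
        exact hne (Prod.ext (he1.symm.trans he2) h)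
      have := hHp p.2 q₁.2 q₂.2 ha1 ha2 hq
      omega
  · -- interval property
    intro p i j k hi hk hij hjk
    obtain ⟨q₁, hadj1, hc1⟩ := hi
    obtain ⟨q₂, hadj2, hc2⟩ := hk
    rcases SimpleGraph.boxProd_adj.mp hadj1 with ⟨ha1, he1⟩ | ⟨ha1, he1⟩ <;>
      rcases SimpleGraph.boxProd_adj.mp hadj2 with ⟨ha2, he2⟩ | ⟨ha2, he2⟩
    · -- both horizontal
      rw [boxColor_horiz G H cG cH he1] at hc1
      rw [boxColor_horiz G H cG cH he2] at hc2
      set o := sInf (vset H cH p.2) - 1 with ho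
      obtain ⟨w, hw, hcw⟩ := hGi p.1 (cG s(p.1, q₁.1)) (j - o) (cG s(p.1, q₂.1))
        ⟨q₁.1, ha1, rfl⟩ ⟨q₂.1, ha2, rfl⟩ (by omega) (by omega)
      refine ⟨(w, p.2), SimpleGraph.boxProd_adj.mpr (Or.inl ⟨hw, rfl⟩), ?_⟩
      rw [boxColor_horiz' G H cG cH p w]
      omega
    · -- i horizontal, k vertical
      rw [boxColor_horiz G H cG cH he1] at hc1
      rw [boxColor_vert G H cG cH ha2.ne he2] at hc2
      set b := sSup (vset G cG p.1) with hb
      set m := sInf (vset H cH p.2) with hm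
      have hmmem : m ∈ vset H cH p.2 := Nat.sInf_mem ⟨_, ⟨q₂.2, ha2, rfl⟩⟩
      have hm1 : 1 ≤ m := (hSHle p.2 m hmmem).1
      have hmle : m ≤ cH s(p.2, q₂.2) := Nat.sInf_le ⟨q₂.2, ha2, rfl⟩
      have hbmem : b ∈ vset G cG p.1 :=
        Nat.sSup_mem ⟨_, ⟨q₁.1, ha1, rfl⟩⟩ (hSGbdd p.1)
      have hale : cG s(p.1, q₁.1) ≤ b := le_csSup (hSGbdd p.1) ⟨q₁.1, ha1, rfl⟩
      by_cases hj : j ≤ b + (m - 1)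
      · obtain ⟨w, hw, hcw⟩ := hGi p.1 (cG s(p.1, q₁.1)) (j - (m - 1)) b
          ⟨q₁.1, ha1, rfl⟩ hbmem (by omega) (by omega)
        refine ⟨(w, p.2), SimpleGraph.boxProd_adj.mpr (Or.inl ⟨hw, rfl⟩), ?_⟩
        rw [boxColor_horiz' G H cG cH p w]
        omega
      · obtain ⟨w, hw, hcw⟩ := hHi p.2 m (j - b) (cH s(p.2, q₂.2))
          hmmem ⟨q₂.2, ha2, rfl⟩ (by omega) (by omega)
        refine ⟨(p.1, w), SimpleGraph.boxProd_adj.mpr (Or.inr ⟨hw, rfl⟩), ?_⟩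
        rw [boxColor_vert' G H cG cH p w hw.ne]
        omega
    · -- i vertical, k horizontal : contradiction
      exfalso
      rw [boxColor_vert G H cG cH ha1.ne he1] at hc1
      rw [boxColor_horiz G H cG cH he2] at hc2
      have hmmem : sInf (vset H cH p.2) ∈ vset H cH p.2 :=
        Nat.sInf_mem ⟨_, ⟨q₁.2, ha1, rfl⟩⟩
      have hm1 : 1 ≤ sInf (vset H cH p.2) := (hSHle p.2 _ hmmem).1
      have hmle : sInf (vset H cH p.2) ≤ cH s(p.2, q₁.2) := Nat.sInf_le ⟨q₁.2, ha1, rfl⟩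
      have hale : cG s(p.1, q₂.1) ≤ sSup (vset G cG p.1) :=
        le_csSup (hSGbdd p.1) ⟨q₂.1, ha2, rfl⟩
      omega
    · -- both vertical
      rw [boxColor_vert G H cG cH ha1.ne he1] at hc1
      rw [boxColor_vert G H cG cH ha2.ne he2] at hc2
      set b := sSup (vset G cG p.1) with hb
      obtain ⟨w, hw, hcw⟩ := hHi p.2 (cH s(p.2, q₁.2)) (j - b) (cH s(p.2, q₂.2))
        ⟨q₁.2, ha1, rfl⟩ ⟨q₂.2, ha2, rfl⟩ (by omega) (by omega)
      refine ⟨(p.1, w), SimpleGraph.boxProd_adj.mpr (Or.inr ⟨hw, rfl⟩), ?_⟩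
      rw [boxColor_vert' G H cG cH p w hw.ne]
      omega

lemma hasIC_bddAbove {V : Type*} [Fintype V] (G : SimpleGraph V) :
    BddAbove {t | HasIntervalColoring G t} := by
  classical
  refine ⟨Fintype.card (Sym2 V), ?_⟩
  rintro t ⟨c, h1, h2, -, -⟩
  choose e he hce using fun i : Fin t =>
    h2 (i + 1) (by omega) (by have := i.isLt; omega)
  have hinj : Function.Injective e := by
    intro a b hab
    have h := hce a
    rw [hab, hce b] at h
    exact Fin.ext (by omega)
  simpa using Fintype.card_le_of_injective e hinj

/-- If `G, H ∈ 𝔑`, then `G □ H ∈ 𝔑`; moreover `w(G □ H) ≤ w(G) + w(H)` and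
`W(G □ H) ≥ W(G) + W(H)`. -/
theorem boxProd_interval_colorable {α β : Type*} [Fintype α] [Fintype β]
    (G : SimpleGraph α) (H : SimpleGraph β)
    (hG : IntervalColorable G) (hH : IntervalColorable H) :
    IntervalColorable (G □ H) ∧
    wNum (G □ H) ≤ wNum G + wNum H ∧
    WNum (G □ H) ≥ WNum G + WNum H := by
  classical
  obtain ⟨t₀, ht₀, hGc₀⟩ := hG
  obtain ⟨s₀, hs₀, hHc₀⟩ := hH
  -- G and H have at least one edge
  obtain ⟨cG₀, -, hGs₀, -, -⟩ := id hGc₀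
  obtain ⟨eG, heG, -⟩ := hGs₀ 1 le_rfl ht₀
  obtain ⟨cH₀, -, hHs₀, -, -⟩ := id hHc₀
  obtain ⟨eH, heH, -⟩ := hHs₀ 1 le_rfl hs₀
  have hposG : ∀ t' ∈ {t | HasIntervalColoring G t}, 1 ≤ t' := by
    rintro t' ⟨c, hr, -⟩
    have := hr eG heG
    omega
  have hposH : ∀ t' ∈ {t | HasIntervalColoring H t}, 1 ≤ t' := by
    rintro t' ⟨c, hr, -⟩
    have := hr eH heH
    omega
  have hneG : {t | HasIntervalColoring G t}.Nonempty := ⟨t₀, hGc₀⟩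
  have hneH : {t | HasIntervalColoring H t}.Nonempty := ⟨s₀, hHc₀⟩
  have hwG : HasIntervalColoring G (wNum G) := Nat.sInf_mem hneG
  have hwH : HasIntervalColoring H (wNum H) := Nat.sInf_mem hneH
  have hWG : HasIntervalColoring G (WNum G) := Nat.sSup_mem hneG (hasIC_bddAbove G)
  have hWH : HasIntervalColoring H (WNum H) := Nat.sSup_mem hneH (hasIC_bddAbove H)
  have hwG1 : 1 ≤ wNum G := hposG _ hwG
  have hwH1 : 1 ≤ wNum H := hposH _ hwH
  have hWG1 : 1 ≤ WNum G := hposG _ hWG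
  have hWH1 : 1 ≤ WNum H := hposH _ hWH
  refine ⟨⟨wNum G + wNum H, by omega, combine G H hwG1 hwH1 hwG hwH⟩, ?_, ?_⟩
  · exact Nat.sInf_le (combine G H hwG1 hwH1 hwG hwH)
  · exact le_csSup (hasIC_bddAbove (G □ H)) (combine G H hWG1 hWH1 hWG hWH)
end
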